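/- Let n ≥ 2 and for x ∈ Δ^{n+1} with x ≠ eᵢ let pᵢ(x) := (1/(1−xᵢ))·(x₁,…,x̂ᵢ,…,x_{n+1}) ∈ Δⁿ (delete the i-th coordinate and renormalize). Define the Bayesian order recursively: on Δ², x ⊑ y iff (y₁ ≤ x₁ ≤ 1/2 or 1/2 ≤ x₁ ≤ y₁); on Δ^{n+1}, x ⊑ y iff for all i, whenever x ≠ eᵢ and y ≠ eᵢ one has pᵢ(x) ⊑ pᵢ(y). Then for all x, y ∈ Δⁿ (n ≥ 2): x ⊑ y if and only if there is a permutation σ of {1,…,n} such that x∘σ and y∘σ are both decreasing and (x∘σ)ᵢ·(y∘σ)ᵢ₊₁ ≤ (x∘σ)ᵢ₊₁·(y∘σ)ᵢ for all 1 ≤ i < n. -/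

import Mathlib

/-- Δⁿ : classical n-states. -/
def IsClassicalState (n : ℕ) (x : Fin n → ℝ) : Prop :=
  (∀ i, 0 ≤ x i) ∧ ∑ i, x i = 1

/-- The pure state eᵢ. -/
def pureState {n : ℕ} (i : Fin n) : Fin n → ℝ := fun j => if j = i then 1 else 0

/-- The Bayesian projection pᵢ : delete the i-th coordinate and renormalize. -/
noncomputable def bayesProj {n : ℕ} (i : Fin (n + 1)) (x : Fin (n + 1) → ℝ) :
    Fin n → ℝ := fun j => x (i.succAbove j) / (1 - x i)

/-- The Bayesian order, defined recursively: on Δ² explicitly, and on Δ^{n+1} via the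
Bayesian projections. -/
noncomputable def bayesRec : (n : ℕ) → (Fin n → ℝ) → (Fin n → ℝ) → Prop
  | 0, _, _ => True
  | 1, _, _ => True
  | 2, x, y => (y 0 ≤ x 0 ∧ x 0 ≤ 1 / 2) ∨ (1 / 2 ≤ x 0 ∧ x 0 ≤ y 0)
  | n + 3, x, y =>
      ∀ i : Fin (n + 3), x ≠ pureState i → y ≠ pureState i →
        bayesRec (n + 2) (bayesProj i x) (bayesProj i y)

/-- The symmetric characterization of the Bayesian order. -/
def bayesSym {n : ℕ} (x y : Fin n → ℝ) : Prop :=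
  ∃ σ : Equiv.Perm (Fin n),
    Antitone (fun i => x (σ i)) ∧ Antitone (fun i => y (σ i)) ∧
    ∀ i j : Fin n, (i : ℕ) + 1 = (j : ℕ) →
      x (σ i) * y (σ j) ≤ x (σ j) * y (σ i)

/-- Pairwise condition: a permutation-free reformulation of `bayesSym`. -/
def pairCond {n : ℕ} (x y : Fin n → ℝ) : Prop :=
  ∀ a b : Fin n, x b < x a → y b ≤ y a ∧ x a * y b ≤ x b * y a

lemma classical_lt_one {n : ℕ} {x : Fin (n + 1) → ℝ} (hx : IsClassicalState (n + 1) x)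
    {i : Fin (n + 1)} (hxi : x ≠ pureState i) : x i < 1 := by
  obtain ⟨hnn, hsum⟩ := hx
  rcases lt_or_eq_of_le (show x i ≤ 1 by
    rw [← hsum]
    exact Finset.single_le_sum (fun j _ => hnn j) (Finset.mem_univ i)) with h | h
  · exact h
  exfalso
  apply hxi
  have hrest : ∑ j : Fin n, x (i.succAbove j) = 0 := by
    have := Fin.sum_univ_succAbove x i
    rw [hsum, h] at this
    linarith
  have hzero : ∀ j : Fin n, x (i.succAbove j) = 0 := by
    intro j
    have := Finset.sum_eq_zero_iff_of_nonneg (fun j _ => hnn (i.succAbove j)) |>.1 hrest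
    exact this j (Finset.mem_univ j)
  funext j
  rcases eq_or_ne j i with rfl | hji
  · simp [pureState, h]
  · obtain ⟨k, rfl⟩ := Fin.exists_succAbove_eq hji
    simp [pureState, Fin.succAbove_ne, hzero k, hji]

lemma classical_bayesProj {n : ℕ} {x : Fin (n + 1) → ℝ} (hx : IsClassicalState (n + 1) x)
    {i : Fin (n + 1)} (hxi : x ≠ pureState i) : IsClassicalState n (bayesProj i x) := by
  have hlt : 0 < 1 - x i := by linarith [classical_lt_one hx hxi]
  constructor
  · intro j
    exact div_nonneg (hx.1 _) hlt.le
  · have := Fin.sum_univ_succAbove x i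
    rw [hx.2] at this
    simp only [bayesProj]
    rw [← Finset.sum_div, show (∑ j : Fin n, x (i.succAbove j)) = 1 - x i by linarith,
      div_self hlt.ne']

/-- chain lemma -/
lemma chain {n : ℕ} {u v : Fin n → ℝ} (hu : Antitone u) (hv : Antitone v)
    (hu0 : ∀ i, 0 ≤ u i) (hv0 : ∀ i, 0 ≤ v i)
    (hcons : ∀ i j : Fin n, (i : ℕ) + 1 = (j : ℕ) → u i * v j ≤ u j * v i) :
    ∀ i j : Fin n, i ≤ j → u i * v j ≤ u j * v i := by
  suffices h : ∀ (k : ℕ) (i j : Fin n), (j : ℕ) = (i : ℕ) + k → u i * v j ≤ u j * v i by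
    intro i j hij
    exact h ((j : ℕ) - (i : ℕ)) i j (by omega)
  intro k
  induction k with
  | zero => intro i j hij; have : i = j := Fin.ext (by omega); subst this; exact le_rfl
  | succ k ih =>
    intro i j hij
    have hj' : (i : ℕ) + k < n := by omega
    set j' : Fin n := ⟨(i : ℕ) + k, hj'⟩ with hj'def
    have hA : u i * v j' ≤ u j' * v i := ih i j' rfl
    have hB : u j' * v j ≤ u j * v j' := hcons j' j (by simp [hj'def]; omega)
    have hj'j : j' ≤ j := by simp only [Fin.le_def, hj'def]; omega
    rcases eq_or_lt_of_le (hu0 j') with h0 | hpos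
    · -- u j' = 0
      have hj'0 : u j' = 0 := h0.symm
      have huj : u j = 0 := le_antisymm (hj'0 ▸ hu hj'j) (hu0 j)
      rw [huj, zero_mul]
      have hA0 : u i * v j' ≤ 0 := by rw [hj'0, zero_mul] at hA; exact hA
      rcases mul_eq_zero.1 (le_antisymm hA0 (mul_nonneg (hu0 i) (hv0 j'))) with h | h
      · simp [h]
      · have : v j = 0 := le_antisymm (h ▸ hv hj'j) (hv0 j)
        simp [this]
    · rcases eq_or_lt_of_le (hv0 j') with h0 | hvpos
      · have : v j = 0 := le_antisymm (h0 ▸ hv hj'j) (hv0 j)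
        rw [this, mul_zero]
        exact mul_nonneg (hu0 j) (hv0 i)
      · have key := mul_le_mul hA hB (mul_nonneg (hu0 j') (hv0 j)) (mul_nonneg (hu0 j') (hv0 i))
        have hq : 0 < u j' * v j' := mul_pos hpos hvpos
        nlinarith [key, hq]

lemma bayesSym_iff_pairCond {n : ℕ} {x y : Fin n → ℝ}
    (hx0 : ∀ i, 0 ≤ x i) (hy0 : ∀ i, 0 ≤ y i) :
    bayesSym x y ↔ pairCond x y := by
  constructor
  · rintro ⟨σ, hxa, hya, hcons⟩
    intro a b hab
    set i := σ.symm a with hi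
    set j := σ.symm b with hj
    have ha : σ i = a := Equiv.apply_symm_apply σ a
    have hb : σ j = b := Equiv.apply_symm_apply σ b
    have hij : i ≤ j := by
      by_contra h
      push_neg at h
      have := hxa h.le
      simp only [ha, hb] at this
      exact absurd this (not_le.2 hab)
    have := chain hxa hya (fun k => hx0 _) (fun k => hy0 _) hcons i j hij
    simp only [ha, hb] at this
    refine ⟨?_, this⟩
    have := hya hij
    simpa [ha, hb] using this
  · intro hP
    set key : Fin n → ℝ ×ₗ ℝ := fun a => toLex (-(x a), -(y a)) with hkey
    set σ := Tuple.sort key with hσ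
    have hmono : Monotone (key ∘ σ) := Tuple.monotone_sort key
    have hmono' : ∀ i j : Fin n, i ≤ j →
        -x (σ i) < -x (σ j) ∨ (-x (σ i) = -x (σ j) ∧ -y (σ i) ≤ -y (σ j)) := by
      intro i j hij
      have := hmono hij
      simpa only [Function.comp, hkey, Prod.Lex.le_iff, ofLex_toLex] using this
    have hxa : Antitone (fun i => x (σ i)) := by
      intro i j hij
      rcases hmono' i j hij with h | ⟨h, _⟩
      · show x (σ j) ≤ x (σ i); linarith
      · show x (σ j) ≤ x (σ i); linarith
    have hya : Antitone (fun i => y (σ i)) := by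
      intro i j hij
      rcases lt_or_eq_of_le (hxa hij) with h | h
      · exact (hP _ _ h).1
      · have h2 : x (σ j) = x (σ i) := h
        rcases hmono' i j hij with h' | ⟨_, h'⟩
        · show y (σ j) ≤ y (σ i); linarith
        · show y (σ j) ≤ y (σ i); linarith
    refine ⟨σ, hxa, hya, ?_⟩
    intro i j hij
    have hle : i ≤ j := by rw [Fin.le_def]; omega
    rcases lt_or_eq_of_le (hxa hle) with h | h
    · exact (hP _ _ h).2
    · dsimp at h
      rw [← h]
      exact mul_le_mul_of_nonneg_left (hya hle) (hx0 _)

lemma exists_third {n : ℕ} (a b : Fin (n + 3)) : ∃ c, c ≠ a ∧ c ≠ b := by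
  have hcard : (({a, b} : Finset (Fin (n + 3))).card) ≤ 2 :=
    (Finset.card_insert_le _ _).trans (by simp)
  have hne : ({a, b} : Finset (Fin (n + 3))) ≠ Finset.univ := by
    intro he
    rw [he, Finset.card_univ, Fintype.card_fin] at hcard
    omega
  obtain ⟨c, _, hc⟩ := Finset.exists_of_ssubset (Finset.ssubset_univ_iff.2 hne)
  simp only [Finset.mem_insert, Finset.mem_singleton, not_or] at hc
  exact ⟨c, hc.1, hc.2⟩

lemma bayesRec_iff_pairCond : ∀ (n : ℕ), 2 ≤ n → ∀ (x y : Fin n → ℝ),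
    IsClassicalState n x → IsClassicalState n y → (bayesRec n x y ↔ pairCond x y) := by
  intro n
  induction n with
  | zero => omega
  | succ m ih =>
    intro hn x y hx hy
    match m, hn with
    | 1, _ =>
      -- n = 2 base case
      have hx1 : x 1 = 1 - x 0 := by
        have := hx.2
        rw [Fin.sum_univ_two] at this
        linarith
      have hy1 : y 1 = 1 - y 0 := by
        have := hy.2
        rw [Fin.sum_univ_two] at this
        linarith
      have hx00 := hx.1 0
      have hx01 := hx.1 1
      have hy00 := hy.1 0
      have hy01 := hy.1 1
      constructor
      · intro h a b hab
        fin_cases a <;> fin_cases b <;> simp_all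
        · constructor <;> rcases h with ⟨h1, h2⟩ | ⟨h1, h2⟩ <;> nlinarith
        · constructor <;> rcases h with ⟨h1, h2⟩ | ⟨h1, h2⟩ <;> nlinarith
      · intro hP
        show (y 0 ≤ x 0 ∧ x 0 ≤ 1 / 2) ∨ (1 / 2 ≤ x 0 ∧ x 0 ≤ y 0)
        rcases lt_trichotomy (x 0) (1/2) with h | h | h
        · left
          refine ⟨?_, h.le⟩
          have := hP 1 0 (by rw [hx1]; linarith)
          rw [hx1, hy1] at this
          nlinarith [this.2]
        · rcases le_total (y 0) (x 0) with h' | h'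
          · left; exact ⟨h', h.le⟩
          · right; exact ⟨h.ge, h'⟩
        · right
          refine ⟨h.le, ?_⟩
          have := hP 0 1 (by rw [hx1]; linarith)
          rw [hx1, hy1] at this
          nlinarith [this.2]
    | (k + 2), _ =>
      -- n = k + 3 inductive step
      have IH := ih (by omega)
      constructor
      · intro h a b hab
        obtain ⟨c, hca, hcb⟩ := exists_third a b
        by_cases hxc : x = pureState c
        · exfalso
          have hxa : x a = 0 := by rw [hxc]; simp [pureState, hca.symm, Ne.symm hca]
          have hxb : x b = 0 := by rw [hxc]; simp [pureState, Ne.symm hcb]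
          rw [hxa, hxb] at hab; exact lt_irrefl _ hab
        by_cases hyc : y = pureState c
        · have hya : y a = 0 := by rw [hyc]; simp [pureState, Ne.symm hca]
          have hyb : y b = 0 := by rw [hyc]; simp [pureState, Ne.symm hcb]
          rw [hya, hyb]
          simp
        · have hrec := h c hxc hyc
          have hPc := (IH _ _ (classical_bayesProj hx hxc) (classical_bayesProj hy hyc)).1 hrec
          obtain ⟨a', ha'⟩ := Fin.exists_succAbove_eq (Ne.symm hca)
          obtain ⟨b', hb'⟩ := Fin.exists_succAbove_eq (Ne.symm hcb)
          have hxpos : 0 < 1 - x c := by linarith [classical_lt_one hx hxc]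
          have hypos : 0 < 1 - y c := by linarith [classical_lt_one hy hyc]
          have hlt : bayesProj c x b' < bayesProj c x a' := by
            simp only [bayesProj, ha', hb']
            exact (div_lt_div_iff_of_pos_right hxpos).2 hab
          obtain ⟨h1, h2⟩ := hPc a' b' hlt
          simp only [bayesProj, ha', hb'] at h1 h2
          constructor
          · exact (div_le_div_iff_of_pos_right hypos).1 h1
          · rw [div_mul_div_comm, div_mul_div_comm,
              div_le_div_iff_of_pos_right (mul_pos hxpos hypos)] at h2
            exact h2
      · intro hP i hxi hyi
        apply (IH _ _ (classical_bayesProj hx hxi) (classical_bayesProj hy hyi)).2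
        intro a b hab
        have hxpos : 0 < 1 - x i := by linarith [classical_lt_one hx hxi]
        have hypos : 0 < 1 - y i := by linarith [classical_lt_one hy hyi]
        simp only [bayesProj] at hab ⊢
        have hab' : x (i.succAbove b) < x (i.succAbove a) := by
          rwa [div_lt_div_iff_of_pos_right hxpos] at hab
        obtain ⟨h1, h2⟩ := hP _ _ hab'
        constructor
        · exact (div_le_div_iff_of_pos_right hypos).2 h1
        · rw [div_mul_div_comm, div_mul_div_comm,
            div_le_div_iff_of_pos_right (mul_pos hxpos hypos)]
          exact h2

theorem bayesian_order_symmetric_characterization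
    (n : ℕ) (hn : 2 ≤ n) (x y : Fin n → ℝ)
    (hx : IsClassicalState n x) (hy : IsClassicalState n y) :
    bayesRec n x y ↔ bayesSym x y :=
  (bayesRec_iff_pairCond n hn x y hx hy).trans (bayesSym_iff_pairCond hx.1 hy.1).symm
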